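/- Let (ν⁽ˡ⁾(X))_{l=0}^{L} be a sequence of Bochner-integrable random vectors in ℝ^p with ν⁽⁰⁾(X) = 0 that is a weak martingale, i.e. E[ ν⁽ⁱ⁾(X) | σ(ν⁽ʲ⁾(X)) ] = ν⁽ʲ⁾(X) almost surely whenever j < i. Suppose ‖ν⁽ˡ⁾(X) − ν⁽ˡ⁻¹⁾(X)‖₂ ≤ M almost surely for every l ∈ {1,…,L}, with M > 0. Then for every l ∈ {1,…,L} and every a > 0, P( ‖ν⁽ˡ⁾(X)‖₂ ≥ M·a ) < 2·exp( 1 − (a−1)²/(2l) ). -/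

import Mathlib

open MeasureTheory Real


lemma wm_hasSum (c : ℝ) {t : ℝ} (ht : 0 ≤ t) :
    HasSum (fun n => (c ^ 2 * t) ^ n / ((2 * n).factorial : ℝ)) (Real.cosh (c * Real.sqrt t)) := by
  have h := Real.hasSum_cosh (c * Real.sqrt t)
  convert h using 2 with n
  rw [pow_mul, mul_pow c (Real.sqrt t) 2, Real.sq_sqrt ht]

lemma wm_chord (c : ℝ) {θ t₀ t₁ : ℝ} (h₀ : 0 ≤ t₀) (h₁ : 0 ≤ t₁)
    (hθ0 : 0 ≤ θ) (hθ1 : θ ≤ 1) :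
    Real.cosh (c * Real.sqrt ((1 - θ) * t₀ + θ * t₁)) ≤
      (1 - θ) * Real.cosh (c * Real.sqrt t₀) + θ * Real.cosh (c * Real.sqrt t₁) := by
  have ht : 0 ≤ (1 - θ) * t₀ + θ * t₁ :=
    add_nonneg (mul_nonneg (by linarith) h₀) (mul_nonneg hθ0 h₁)
  refine hasSum_le (fun n => ?_) (wm_hasSum c ht)
    (((wm_hasSum c h₀).mul_left (1 - θ)).add ((wm_hasSum c h₁).mul_left θ))
  have key : (c ^ 2 * ((1 - θ) * t₀ + θ * t₁)) ^ n
      ≤ (1 - θ) * (c ^ 2 * t₀) ^ n + θ * (c ^ 2 * t₁) ^ n := by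
    have h := (convexOn_pow n).2 (Set.mem_Ici.mpr (mul_nonneg (sq_nonneg c) h₀))
      (Set.mem_Ici.mpr (mul_nonneg (sq_nonneg c) h₁)) (by linarith : (0:ℝ) ≤ 1 - θ) hθ0
      (by ring)
    simpa [smul_eq_mul, mul_add, mul_left_comm, mul_comm, mul_assoc] using h
  have hd : (0:ℝ) < ((2 * n).factorial : ℝ) := by positivity
  calc (c ^ 2 * ((1 - θ) * t₀ + θ * t₁)) ^ n / ((2 * n).factorial : ℝ)
      ≤ ((1 - θ) * (c ^ 2 * t₀) ^ n + θ * (c ^ 2 * t₁) ^ n) / ((2 * n).factorial : ℝ) := by gcongr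
    _ = (1 - θ) * ((c ^ 2 * t₀) ^ n / ((2 * n).factorial : ℝ)) + θ * ((c ^ 2 * t₁) ^ n / ((2 * n).factorial : ℝ)) := by
        ring

open Classical in
noncomputable def wmCoeff {p : ℕ} (lam M : ℝ) (x : EuclideanSpace ℝ (Fin p)) : ℝ :=
  if x = 0 then 0 else Real.sinh (lam * ‖x‖) * Real.sinh (lam * M) / (M * ‖x‖)

lemma wm_master {p : ℕ} {lam M : ℝ} (hlam : 0 ≤ lam) (hM : 0 < M)
    (x d : EuclideanSpace ℝ (Fin p)) (hd : ‖d‖ ≤ M) :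
    Real.cosh (lam * ‖x + d‖) ≤
      Real.cosh (lam * ‖x‖) * Real.cosh (lam * M)
        + (inner ℝ x d : ℝ) * wmCoeff lam M x := by
  by_cases hx : x = 0
  · simp only [hx, wmCoeff, if_pos rfl, inner_zero_left, zero_mul, add_zero, zero_add,
      norm_zero, mul_zero, Real.cosh_zero, one_mul]
    refine Real.cosh_le_cosh.mpr ?_
    rw [abs_of_nonneg (mul_nonneg hlam (norm_nonneg d)),
      abs_of_nonneg (mul_nonneg hlam hM.le)]
    exact mul_le_mul_of_nonneg_left hd hlam
  · have hb : 0 < ‖x‖ := norm_pos_iff.mpr hx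
    set b : ℝ := ‖x‖ with hbdef
    set q : ℝ := (inner ℝ x d : ℝ) with hq
    have hqle : |q| ≤ b * M :=
      (abs_real_inner_le_norm x d).trans (mul_le_mul_of_nonneg_left hd (norm_nonneg x))
    have hq1 := (abs_le.mp hqle).1
    have hq2 := (abs_le.mp hqle).2
    have hbM : 0 < b * M := mul_pos hb hM
    set θ : ℝ := (b * M + q) / (2 * (b * M)) with hθ
    have hθ0 : 0 ≤ θ := div_nonneg (by linarith) (by positivity)
    have hθ1 : θ ≤ 1 := by
      rw [div_le_one (by positivity)]; linarith
    have hcomb : (1 - θ) * ((b - M) ^ 2) + θ * ((b + M) ^ 2) = b ^ 2 + 2 * q + M ^ 2 := by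
      rw [hθ]; field_simp; ring
    have h1 : ‖x + d‖ ^ 2 ≤ b ^ 2 + 2 * q + M ^ 2 := by
      rw [norm_add_sq_real]
      have : ‖d‖ ^ 2 ≤ M ^ 2 := pow_le_pow_left₀ (norm_nonneg d) hd 2
      rw [← hbdef, ← hq]; linarith
    have h2 : Real.cosh (lam * ‖x + d‖) ≤
        Real.cosh (lam * Real.sqrt (b ^ 2 + 2 * q + M ^ 2)) := by
      refine Real.cosh_le_cosh.mpr ?_
      rw [abs_of_nonneg (mul_nonneg hlam (norm_nonneg _)),
        abs_of_nonneg (mul_nonneg hlam (Real.sqrt_nonneg _))]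
      refine mul_le_mul_of_nonneg_left ?_ hlam
      calc ‖x + d‖ = Real.sqrt (‖x + d‖ ^ 2) := (Real.sqrt_sq (norm_nonneg _)).symm
        _ ≤ Real.sqrt (b ^ 2 + 2 * q + M ^ 2) := Real.sqrt_le_sqrt h1
    have h3 := wm_chord lam (sq_nonneg (b - M)) (sq_nonneg (b + M)) hθ0 hθ1
    rw [hcomb, Real.sqrt_sq_eq_abs, Real.sqrt_sq (by positivity : (0:ℝ) ≤ b + M)] at h3
    have habs : Real.cosh (lam * |b - M|) = Real.cosh (lam * (b - M)) := by
      rw [← Real.cosh_abs (lam * (b - M)), abs_mul, abs_of_nonneg hlam]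
    rw [habs] at h3
    have hexp : (1 - θ) * Real.cosh (lam * (b - M)) + θ * Real.cosh (lam * (b + M))
        = Real.cosh (lam * b) * Real.cosh (lam * M)
          + q * (Real.sinh (lam * b) * Real.sinh (lam * M) / (M * b)) := by
      rw [mul_sub, mul_add, Real.cosh_sub, Real.cosh_add, hθ]
      field_simp
      ring
    rw [hexp] at h3
    have hcoeff : wmCoeff lam M x
        = Real.sinh (lam * b) * Real.sinh (lam * M) / (M * b) := by
      simp only [wmCoeff, if_neg hx, ← hbdef]
    rw [hcoeff]
    exact h2.trans h3

lemma wm_abs_coord_le {p : ℕ} (x : EuclideanSpace ℝ (Fin p)) (i : Fin p) : |x i| ≤ ‖x‖ := by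
  rw [EuclideanSpace.norm_eq]
  calc |x i| = Real.sqrt (‖x i‖ ^ 2) := by
        rw [Real.sqrt_sq_eq_abs, Real.norm_eq_abs, abs_abs]
    _ ≤ Real.sqrt (∑ j, ‖x j‖ ^ 2) :=
        Real.sqrt_le_sqrt (Finset.single_le_sum (f := fun j => ‖x j‖ ^ 2)
          (fun j _ => sq_nonneg _) (Finset.mem_univ i))

set_option maxHeartbeats 2000000

/-- Tail bound for the layer outputs of a stochastic deep neural
network of constant width `p` that form a weak martingale: let `(ν⁽ˡ⁾(X))_{l=0}^{L}`
be Bochner-integrable random vectors in `ℝ^p` with `ν⁽⁰⁾(X) = 0` such that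
`E[ν⁽ⁱ⁾(X) | σ(ν⁽ʲ⁾(X))] = ν⁽ʲ⁾(X)` a.s. whenever `j < i ≤ L`, and suppose
`‖ν⁽ˡ⁾(X) − ν⁽ˡ⁻¹⁾(X)‖₂ ≤ M` almost surely for every `l ∈ {1,…,L}`, with `M > 0`.
Then for every `l ∈ {1,…,L}` and every `a > 0`,
`P(‖ν⁽ˡ⁾(X)‖₂ ≥ M·a) < 2 exp(1 − (a−1)²/(2l))`. -/
theorem weakMartingale_layers_tail_bound
    {Ω : Type*} {mΩ : MeasurableSpace Ω} (μ : Measure Ω) [IsProbabilityMeasure μ]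
    {p L : ℕ} (ν : ℕ → Ω → EuclideanSpace ℝ (Fin p))
    (hmeas : ∀ l, Measurable (ν l))
    (hint : ∀ l, Integrable (ν l) μ)
    (hν0 : ν 0 = 0)
    (hmart : ∀ i j, j < i → i ≤ L →
      μ[ν i|MeasurableSpace.comap (ν j) inferInstance] =ᵐ[μ] ν j)
    (M : ℝ) (hM : 0 < M)
    (hdiff : ∀ l, 1 ≤ l → l ≤ L → ∀ᵐ ω ∂μ, ‖ν l ω - ν (l - 1) ω‖ ≤ M) :
    ∀ l, 1 ≤ l → l ≤ L → ∀ a : ℝ, 0 < a →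
      (μ {ω | M * a ≤ ‖ν l ω‖}).toReal < 2 * Real.exp (1 - (a - 1) ^ 2 / (2 * l)) := by
  intro l hl1 hlL a ha
  have hl0 : (0:ℝ) < l := by exact_mod_cast hl1
  set lam : ℝ := a / (l * M) with hlamdef
  have hlam : 0 < lam := div_pos ha (by positivity)
  -- a.e. bound on increments, for all k < l simultaneously
  have hdiffall : ∀ᵐ ω ∂μ, ∀ k, k < l → ‖ν (k + 1) ω - ν k ω‖ ≤ M := by
    rw [ae_all_iff]
    intro k
    by_cases hk : k < l
    · filter_upwards [hdiff (k + 1) (by omega) (by omega)] with ω h _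
      simpa using h
    · filter_upwards with ω h
      exact absurd h hk
  -- a.e. bound on norms
  have hbound : ∀ᵐ ω ∂μ, ∀ k, k ≤ l → ‖ν k ω‖ ≤ M * k := by
    filter_upwards [hdiffall] with ω hω
    intro k
    induction k with
    | zero => intro _; simp [hν0]
    | succ k ih =>
      intro hk1
      have h1 := hω k (by omega)
      have h2 := ih (by omega)
      have e : ν (k + 1) ω = ν k ω + (ν (k + 1) ω - ν k ω) := by abel
      calc ‖ν (k + 1) ω‖ = ‖ν k ω + (ν (k + 1) ω - ν k ω)‖ := by rw [← e]
        _ ≤ ‖ν k ω‖ + ‖ν (k + 1) ω - ν k ω‖ := norm_add_le _ _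
        _ ≤ M * k + M := add_le_add h2 h1
        _ = M * (k + 1 : ℕ) := by push_cast; ring
  -- measurability and integrability of cosh moments
  have hcosh_meas : ∀ k, Measurable fun ω => Real.cosh (lam * ‖ν k ω‖) := fun k =>
    Real.continuous_cosh.measurable.comp (((hmeas k).norm).const_mul lam)
  have hcoshint : ∀ k, k ≤ l → Integrable (fun ω => Real.cosh (lam * ‖ν k ω‖)) μ := by
    intro k hk
    refine Integrable.mono' (integrable_const (Real.cosh (lam * (M * k))))
      (hcosh_meas k).aestronglyMeasurable ?_
    filter_upwards [hbound] with ω hω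
    rw [Real.norm_eq_abs, abs_of_pos (Real.cosh_pos _)]
    refine Real.cosh_le_cosh.mpr ?_
    rw [abs_of_nonneg (by positivity), abs_of_nonneg (by positivity)]
    exact mul_le_mul_of_nonneg_left (hω k hk) hlam.le
  -- the key induction: the exponential moment grows at most geometrically
  have hkey : ∀ k, k ≤ l → ∫ ω, Real.cosh (lam * ‖ν k ω‖) ∂μ ≤ Real.cosh (lam * M) ^ k := by
    intro k
    induction k with
    | zero =>
      intro _
      simp [hν0]
    | succ k ih =>
      intro hk1
      have hkl : k ≤ l := by omega
      have ihe := ih hkl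
      set D : Ω → EuclideanSpace ℝ (Fin p) := ν (k + 1) - ν k with hDdef
      have hDapp : ∀ ω, D ω = ν (k + 1) ω - ν k ω := fun ω => rfl
      have hDint : Integrable D μ := (hint (k + 1)).sub (hint k)
      have hDmeas : Measurable D := (hmeas (k + 1)).sub (hmeas k)
      have hDiint : ∀ i : Fin p, Integrable (fun ω => D ω i) μ := by
        intro i
        have := (EuclideanSpace.proj i (𝕜 := ℝ)).integrable_comp hDint
        simpa [PiLp.proj_apply] using this
      -- the coefficient function is measurable
      have hcoeff_meas : Measurable (wmCoeff lam M : EuclideanSpace ℝ (Fin p) → ℝ) := by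
        unfold wmCoeff
        refine Measurable.ite ?_ measurable_const ?_
        · simpa [Set.setOf_eq_eq_singleton] using
            (measurableSet_singleton (0 : EuclideanSpace ℝ (Fin p)))
        · exact ((Real.continuous_sinh.measurable.comp (measurable_norm.const_mul lam)).mul_const
            _).div ((measurable_norm).const_mul M)
      set G : Ω → Fin p → ℝ := fun ω i => wmCoeff lam M (ν k ω) * ν k ω i with hGdef
      have hGi_meas : ∀ i : Fin p, Measurable (fun ω => G ω i) := by
        intro i
        exact ((hcoeff_meas.comp (hmeas k)).mul
          (((EuclideanSpace.proj i (𝕜 := ℝ)).continuous.measurable).comp (hmeas k)))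
      -- a.e. bound on |G_i|
      have hcoeff_bound : ∀ᵐ ω ∂μ, ∀ i : Fin p,
          |G ω i| ≤ Real.sinh (lam * (M * k)) * Real.sinh (lam * M) / M := by
        filter_upwards [hbound] with ω hω
        intro i
        have hb := hω k hkl
        by_cases hx : ν k ω = 0
        · simp only [hGdef, wmCoeff, if_pos hx, zero_mul, abs_zero]
          have h1 : 0 ≤ Real.sinh (lam * (M * k)) := Real.sinh_nonneg_iff.mpr (by positivity)
          have h2 : 0 ≤ Real.sinh (lam * M) := Real.sinh_nonneg_iff.mpr (by positivity)
          positivity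
        · have hbpos : 0 < ‖ν k ω‖ := norm_pos_iff.mpr hx
          have hcoeffval : wmCoeff lam M (ν k ω)
              = Real.sinh (lam * ‖ν k ω‖) * Real.sinh (lam * M) / (M * ‖ν k ω‖) := by
            simp [wmCoeff, hx]
          have hsinh1 : 0 ≤ Real.sinh (lam * ‖ν k ω‖) :=
            Real.sinh_nonneg_iff.mpr (by positivity)
          have hsinh2 : 0 ≤ Real.sinh (lam * M) := Real.sinh_nonneg_iff.mpr (by positivity)
          have habs : |G ω i| ≤ wmCoeff lam M (ν k ω) * ‖ν k ω‖ := by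
            rw [hGdef, abs_mul]
            have h1 : |wmCoeff lam M (ν k ω)| = wmCoeff lam M (ν k ω) := by
              rw [hcoeffval, abs_of_nonneg (by positivity)]
            rw [h1]
            refine mul_le_mul_of_nonneg_left (wm_abs_coord_le _ i) ?_
            rw [hcoeffval]; positivity
          refine habs.trans ?_
          rw [hcoeffval]
          have heq : Real.sinh (lam * ‖ν k ω‖) * Real.sinh (lam * M) / (M * ‖ν k ω‖) * ‖ν k ω‖
              = Real.sinh (lam * ‖ν k ω‖) * Real.sinh (lam * M) / M := by
            field_simp
          rw [heq]
          gcongr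
          exact Real.sinh_le_sinh.mpr (mul_le_mul_of_nonneg_left hb hlam.le)
      have hDbdd : ∀ᵐ ω ∂μ, ‖D ω‖ ≤ M := by
        filter_upwards [hdiffall] with ω hω
        simpa [hDapp] using hω k (by omega)
      have hprod_int : ∀ i : Fin p, Integrable (fun ω => G ω i * D ω i) μ := by
        intro i
        refine Integrable.mono'
          (integrable_const ((Real.sinh (lam * (M * k)) * Real.sinh (lam * M) / M) * M))
          ((hGi_meas i).mul ((((EuclideanSpace.proj i
            (𝕜 := ℝ)).continuous.measurable).comp hDmeas))).aestronglyMeasurable ?_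
        filter_upwards [hcoeff_bound, hDbdd] with ω h1 h2
        rw [Real.norm_eq_abs, abs_mul]
        have hDi : |D ω i| ≤ M := (wm_abs_coord_le (D ω) i).trans h2
        have hGnn : (0:ℝ) ≤ Real.sinh (lam * (M * k)) * Real.sinh (lam * M) / M := by
          have ha1 : 0 ≤ Real.sinh (lam * (M * k)) := Real.sinh_nonneg_iff.mpr (by positivity)
          have ha2 : 0 ≤ Real.sinh (lam * M) := Real.sinh_nonneg_iff.mpr (by positivity)
          positivity
        exact mul_le_mul (h1 i) hDi (abs_nonneg _) hGnn
      -- each product integrates to zero, by the weak martingale property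
      have hzero : ∀ i : Fin p, ∫ ω, G ω i * D ω i ∂μ = 0 := by
        intro i
        have hm : (MeasurableSpace.comap (ν k) inferInstance) ≤ mΩ := (hmeas k).comap_le
        have hνm : Measurable[(MeasurableSpace.comap (ν k) inferInstance)] (ν k) := Measurable.of_comap_le le_rfl
        have hνsm : StronglyMeasurable[(MeasurableSpace.comap (ν k) inferInstance)] (ν k) := hνm.stronglyMeasurable
        have hDcond : μ[D|(MeasurableSpace.comap (ν k) inferInstance)] =ᵐ[μ] 0 := by
          have h1 := hmart (k + 1) k (Nat.lt_succ_self k) (le_trans hk1 hlL)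
          have h2 : μ[ν k|(MeasurableSpace.comap (ν k) inferInstance)] = ν k := condExp_of_stronglyMeasurable hm hνsm (hint k)
          have h3 := condExp_sub (μ := μ) (m := (MeasurableSpace.comap (ν k) inferInstance)) (hint (k + 1)) (hint k)
          rw [← hDdef] at h3
          filter_upwards [h1, h3] with ω hω1 hω3
          rw [hω3]
          simp only [Pi.sub_apply, Pi.zero_apply, hω1, h2, sub_self]
        have hDcondi : μ[fun ω => D ω i|(MeasurableSpace.comap (ν k) inferInstance)] =ᵐ[μ] 0 := by
          have h0 : (fun _ : Ω => (0:ℝ)) =ᵐ[μ] μ[fun ω => D ω i|(MeasurableSpace.comap (ν k) inferInstance)] := by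
            refine ae_eq_condExp_of_forall_setIntegral_eq hm (hDiint i)
              (fun s _ _ => integrableOn_zero) (fun s hs _ => ?_) ?_
            · have hDs : ∫ ω in s, D ω ∂μ = 0 := by
                rw [← setIntegral_condExp hm hDint hs]
                rw [integral_congr_ae (ae_restrict_of_ae hDcond)]
                simp
              have hcomm := (EuclideanSpace.proj i (𝕜 := ℝ)).integral_comp_comm
                (hDint.integrableOn (s := s))
              rw [integral_zero]
              have heq2 : ∫ ω in s, D ω i ∂μ
                  = (EuclideanSpace.proj i (𝕜 := ℝ)) (∫ ω in s, D ω ∂μ) := by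
                rw [← hcomm]
                simp [PiLp.proj_apply]
              rw [heq2, hDs]
              simp
            · exact StronglyMeasurable.aestronglyMeasurable
                (@stronglyMeasurable_const Ω ℝ (MeasurableSpace.comap (ν k) inferInstance) _ 0)
          exact h0.symm
        have hGi_m : StronglyMeasurable[(MeasurableSpace.comap (ν k) inferInstance)] (fun ω => G ω i) := by
          refine Measurable.stronglyMeasurable ?_
          exact ((hcoeff_meas.comp hνm).mul
            (((EuclideanSpace.proj i (𝕜 := ℝ)).continuous.measurable).comp hνm))
        have hpull := condExp_mul_of_stronglyMeasurable_left hGi_m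
          (by exact hprod_int i) (hDiint i)
        calc ∫ ω, G ω i * D ω i ∂μ
            = ∫ ω, (μ[(fun ω => G ω i) * fun ω => D ω i|(MeasurableSpace.comap (ν k) inferInstance)]) ω ∂μ := by
              rw [integral_condExp hm]; rfl
          _ = ∫ ω, ((fun ω => G ω i) * μ[fun ω => D ω i|(MeasurableSpace.comap (ν k) inferInstance)]) ω ∂μ :=
              integral_congr_ae hpull
          _ = 0 := by
              rw [← integral_zero Ω ℝ (μ := μ)]
              refine integral_congr_ae ?_
              filter_upwards [hDcondi] with ω hω
              simp [hω]
      -- pointwise master inequality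
      have hpt : ∀ᵐ ω ∂μ, Real.cosh (lam * ‖ν (k + 1) ω‖) ≤
          Real.cosh (lam * ‖ν k ω‖) * Real.cosh (lam * M) + ∑ i, G ω i * D ω i := by
        filter_upwards [hDbdd] with ω hω
        have hsimp : ν (k + 1) ω = ν k ω + D ω := by
          rw [hDapp]; abel
        have hmain := wm_master hlam.le hM (ν k ω) (D ω) hω
        rw [hsimp]
        refine hmain.trans_eq ?_
        congr 1
        rw [PiLp.inner_apply]
        simp only [RCLike.inner_apply, starRingEnd_apply, star_trivial]
        rw [Finset.sum_mul]
        simp only [hGdef]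
        refine Finset.sum_congr rfl fun i _ => by ring
      -- integrate
      have hsum_int : Integrable (fun ω => ∑ i, G ω i * D ω i) μ :=
        integrable_finset_sum _ fun i _ => hprod_int i
      have hrhs_int : Integrable
          (fun ω => Real.cosh (lam * ‖ν k ω‖) * Real.cosh (lam * M) + ∑ i, G ω i * D ω i) μ :=
        ((hcoshint k hkl).mul_const _).add hsum_int
      have hstep := integral_mono_ae (hcoshint (k + 1) hk1) hrhs_int hpt
      rw [integral_add ((hcoshint k hkl).mul_const _) hsum_int,
        integral_finset_sum _ (fun i _ => hprod_int i)] at hstep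
      have hzs : (∑ i, ∫ ω, G ω i * D ω i ∂μ) = 0 :=
        Finset.sum_eq_zero fun i _ => hzero i
      rw [hzs, add_zero, integral_mul_const] at hstep
      calc ∫ ω, Real.cosh (lam * ‖ν (k + 1) ω‖) ∂μ
          ≤ (∫ ω, Real.cosh (lam * ‖ν k ω‖) ∂μ) * Real.cosh (lam * M) := hstep
        _ ≤ Real.cosh (lam * M) ^ k * Real.cosh (lam * M) :=
            mul_le_mul_of_nonneg_right ihe (Real.cosh_pos _).le
        _ = Real.cosh (lam * M) ^ (k + 1) := (pow_succ _ _).symm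
  -- Markov inequality
  have hfin := hkey l le_rfl
  have hεpos : 0 < Real.cosh (lam * (M * a)) := Real.cosh_pos _
  have hmarkov := mul_meas_ge_le_integral_of_nonneg
    (ae_of_all μ fun ω => (Real.cosh_pos (lam * ‖ν l ω‖)).le) (hcoshint l le_rfl)
    (Real.cosh (lam * (M * a)))
  have hsub : {ω | M * a ≤ ‖ν l ω‖} ⊆
      {ω | Real.cosh (lam * (M * a)) ≤ Real.cosh (lam * ‖ν l ω‖)} := by
    intro ω hω
    refine Real.cosh_le_cosh.mpr ?_
    rw [abs_of_nonneg (by positivity), abs_of_nonneg (by positivity)]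
    exact mul_le_mul_of_nonneg_left hω hlam.le
  have hmono : (μ {ω | M * a ≤ ‖ν l ω‖}).toReal ≤
      (μ {ω | Real.cosh (lam * (M * a)) ≤ Real.cosh (lam * ‖ν l ω‖)}).toReal :=
    ENNReal.toReal_mono (measure_ne_top μ _) (measure_mono hsub)
  have h4 : Real.cosh (lam * (M * a)) * (μ {ω | M * a ≤ ‖ν l ω‖}).toReal ≤
      Real.cosh (lam * M) ^ l := by
    calc Real.cosh (lam * (M * a)) * (μ {ω | M * a ≤ ‖ν l ω‖}).toReal
        ≤ Real.cosh (lam * (M * a)) *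
          (μ {ω | Real.cosh (lam * (M * a)) ≤ Real.cosh (lam * ‖ν l ω‖)}).toReal :=
          mul_le_mul_of_nonneg_left hmono hεpos.le
      _ ≤ ∫ ω, Real.cosh (lam * ‖ν l ω‖) ∂μ := hmarkov
      _ ≤ Real.cosh (lam * M) ^ l := hfin
  have h5 : (μ {ω | M * a ≤ ‖ν l ω‖}).toReal ≤
      Real.cosh (lam * M) ^ l / Real.cosh (lam * (M * a)) := by
    rw [le_div_iff₀ hεpos]
    linarith [h4]
  -- numeric computations
  have hlamM : lam * M = a / l := by
    rw [hlamdef]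
    field_simp
  have hlamMa : lam * (M * a) = a ^ 2 / l := by
    rw [hlamdef]
    field_simp
  have hc1 : Real.cosh (lam * M) ^ l ≤ Real.exp (a ^ 2 / (2 * l)) := by
    calc Real.cosh (lam * M) ^ l ≤ Real.exp ((lam * M) ^ 2 / 2) ^ l :=
          pow_le_pow_left₀ (Real.cosh_pos _).le (Real.cosh_le_exp_half_sq _) l
      _ = Real.exp (l * ((lam * M) ^ 2 / 2)) := by rw [← Real.exp_nat_mul]
      _ = Real.exp (a ^ 2 / (2 * l)) := by
          rw [hlamM]
          congr 1
          field_simp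
  have hc2 : Real.exp (a ^ 2 / l) / 2 ≤ Real.cosh (lam * (M * a)) := by
    rw [hlamMa, Real.cosh_eq]
    have := Real.exp_pos (-(a ^ 2 / l))
    linarith
  have h6 : (μ {ω | M * a ≤ ‖ν l ω‖}).toReal ≤ 2 * Real.exp (- (a ^ 2 / (2 * l))) := by
    refine h5.trans ?_
    have hexppos : (0:ℝ) < Real.exp (a ^ 2 / l) / 2 := by positivity
    calc Real.cosh (lam * M) ^ l / Real.cosh (lam * (M * a))
        ≤ Real.exp (a ^ 2 / (2 * l)) / (Real.exp (a ^ 2 / l) / 2) :=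
          div_le_div₀ (Real.exp_pos _).le hc1 hexppos hc2
      _ = 2 * Real.exp (- (a ^ 2 / (2 * l))) := by
          rw [Real.exp_neg]
          rw [div_div_eq_mul_div, mul_comm, mul_div_assoc]
          congr 1
          rw [eq_comm, inv_eq_iff_eq_inv, eq_comm, inv_div, ← Real.exp_sub]
          congr 1
          field_simp
          ring
  refine lt_of_le_of_lt h6 ?_
  have hl1' : (1:ℝ) ≤ l := by exact_mod_cast hl1
  have hexp : - (a ^ 2 / (2 * l)) < 1 - (a - 1) ^ 2 / (2 * l) := by
    have h2l : (0:ℝ) < 2 * l := by positivity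
    have hkey2 : -1 < (2 * a - 1) / (2 * l) := by
      rw [lt_div_iff₀ h2l]
      nlinarith [hl0, ha, hl1']
    have heq : 1 - (a - 1) ^ 2 / (2 * l) - (- (a ^ 2 / (2 * l))) = 1 + (2 * a - 1) / (2 * l) := by
      field_simp
      ring
    linarith
  have := Real.exp_lt_exp.mpr hexp
  linarith [this]
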